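/- arXiv:1311.5705 — 4 statements merged into one kernel-verified Lean document; each statement's English description precedes it below -/
import Mathlib

section
/- Let M be a group, let t ∈ M, and let T be the normal closure of {t} in M (so T is a normal subgroup of M containing t). Suppose there exists φ ∈ M with φ * t * φ⁻¹ = t⁻¹. Then the quotient group T / ⁅T, M⁆ (the quotient of T by the commutator subgroup ⁅T, M⁆, which is a normal subgroup of M contained in T) is generated by the image of t, and this image has order dividing 2; in particular the quotient has at most 2 elements. -/
/-- Let `M` be a group, `t ∈ M`, and let `T` be the normal closure of `{t}` in `M`.
If some `φ ∈ M` conjugates `t` to `t⁻¹`, then the quotient `T / ⁅T, M⁆` is generated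
by the image of `t`, this image has order dividing 2, and the quotient has at most
2 elements. -/
theorem normalClosure_quotient_commutator_generated_by_t_of_conj_inv
    {M : Type*} [Group M] (t φ : M) (hφ : φ * t * φ⁻¹ = t⁻¹) :
    (∀ q : (Subgroup.normalClosure {t} : Subgroup M) ⧸
        ((⁅Subgroup.normalClosure {t}, (⊤ : Subgroup M)⁆).subgroupOf
          (Subgroup.normalClosure {t})),
      q ∈ Subgroup.zpowers
        ((QuotientGroup.mk
          (⟨t, Subgroup.subset_normalClosure (Set.mem_singleton t)⟩ :
            (Subgroup.normalClosure {t} : Subgroup M))) :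
          (Subgroup.normalClosure {t} : Subgroup M) ⧸
            ((⁅Subgroup.normalClosure {t}, (⊤ : Subgroup M)⁆).subgroupOf
              (Subgroup.normalClosure {t})))) ∧
    ((QuotientGroup.mk
        (⟨t, Subgroup.subset_normalClosure (Set.mem_singleton t)⟩ :
          (Subgroup.normalClosure {t} : Subgroup M))) :
        (Subgroup.normalClosure {t} : Subgroup M) ⧸
          ((⁅Subgroup.normalClosure {t}, (⊤ : Subgroup M)⁆).subgroupOf
            (Subgroup.normalClosure {t}))) ^ 2 = 1 ∧
    Nat.card ((Subgroup.normalClosure {t} : Subgroup M) ⧸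
        ((⁅Subgroup.normalClosure {t}, (⊤ : Subgroup M)⁆).subgroupOf
          (Subgroup.normalClosure {t}))) ≤ 2 := by
  set T : Subgroup M := Subgroup.normalClosure {t} with hTdef
  set N : Subgroup T := (⁅T, (⊤ : Subgroup M)⁆).subgroupOf T with hNdef
  set t0 : T := ⟨t, Subgroup.subset_normalClosure (Set.mem_singleton t)⟩ with ht0
  set s : T ⧸ N := QuotientGroup.mk t0 with hs
  have hcomm : ∀ (g x : M) (hx : x ∈ T) (hgx : g * x * g⁻¹ ∈ T),
      (QuotientGroup.mk (⟨g * x * g⁻¹, hgx⟩ : T) : T ⧸ N) = QuotientGroup.mk ⟨x, hx⟩ := by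
    intro g x hx hgx
    rw [QuotientGroup.eq]
    rw [hNdef, Subgroup.mem_subgroupOf]
    have : ((⟨g * x * g⁻¹, hgx⟩ : T)⁻¹ * ⟨x, hx⟩ : T) = (g * x * g⁻¹)⁻¹ * x := rfl
    rw [this]
    open scoped commutatorElement in
    have h2 : (g * x * g⁻¹)⁻¹ * x = ⁅g, x⁻¹⁆ := by
      group
    rw [h2, ← Subgroup.commutator_comm]
    exact Subgroup.commutator_mem_commutator (Subgroup.mem_top g) (inv_mem hx)
  -- generation
  have hgen : ∀ q : T ⧸ N, q ∈ Subgroup.zpowers s := by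
    intro q
    induction q using QuotientGroup.induction_on with
    | H x =>
      obtain ⟨x, hx⟩ := x
      refine Subgroup.closure_induction
        (k := Group.conjugatesOfSet ({t} : Set M))
        (p := fun y hy => (QuotientGroup.mk (⟨y, hy⟩ : T) : T ⧸ N) ∈ Subgroup.zpowers s)
        ?_ ?_ ?_ ?_ hx
      · intro y hy
        rw [Group.mem_conjugatesOfSet_iff] at hy
        obtain ⟨a, ha, hconj⟩ := hy
        rw [Set.mem_singleton_iff] at ha
        rw [ha] at hconj
        obtain ⟨c, hc⟩ := isConj_iff.mp hconj
        subst hc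
        rw [hcomm c t t0.2 (Subgroup.subset_normalClosure (Set.mem_singleton t) |>
          fun h => Subgroup.normalClosure_normal.conj_mem t h c)]
        exact Subgroup.mem_zpowers s
      · show (QuotientGroup.mk (⟨1, one_mem T⟩ : T) : T ⧸ N) ∈ Subgroup.zpowers s
        have h1 : ((⟨1, one_mem T⟩ : T)) = (1 : T) := rfl
        rw [h1, QuotientGroup.mk_one]
        exact one_mem _
      · intro a b ha hb iha ihb
        show (QuotientGroup.mk (⟨a * b, mul_mem ha hb⟩ : T) : T ⧸ N) ∈ Subgroup.zpowers s
        have h1 : ((⟨a * b, mul_mem ha hb⟩ : T)) = ⟨a, ha⟩ * ⟨b, hb⟩ := rfl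
        rw [h1, QuotientGroup.mk_mul]
        exact mul_mem iha ihb
      · intro a ha iha
        show (QuotientGroup.mk (⟨a⁻¹, inv_mem ha⟩ : T) : T ⧸ N) ∈ Subgroup.zpowers s
        have h1 : ((⟨a⁻¹, inv_mem ha⟩ : T)) = (⟨a, ha⟩ : T)⁻¹ := rfl
        rw [h1, QuotientGroup.mk_inv]
        exact inv_mem iha
  -- square
  have hsq : s ^ 2 = 1 := by
    have key1 : (QuotientGroup.mk (t0 ^ 2) : T ⧸ N) = 1 := by
      rw [QuotientGroup.eq_one_iff, hNdef, Subgroup.mem_subgroupOf]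
      have h0 : ((t0 ^ 2 : T) : M) = t ^ 2 := rfl
      rw [h0]
      open scoped commutatorElement in
      have h2 : t ^ 2 = (⁅φ, t⁆)⁻¹ := by
        rw [commutatorElement_def, hφ]
        group
      rw [h2, Subgroup.commutator_comm T (⊤ : Subgroup M)]
      exact inv_mem (Subgroup.commutator_mem_commutator (Subgroup.mem_top φ) t0.2)
    rw [hs, ← QuotientGroup.mk_pow]
    exact key1
  refine ⟨hgen, hsq, ?_⟩
  -- cardinality
  have hsurj : Function.Surjective (fun b : Bool => if b then s else 1) := by
    intro q
    obtain ⟨n, hn⟩ := hgen q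
    change s ^ n = q at hn
    have hsq2 : s ^ (2 : ℤ) = 1 := by rw [zpow_two, ← pow_two]; exact hsq
    rcases Int.even_or_odd n with ⟨k, hk⟩ | ⟨k, hk⟩
    · refine ⟨false, ?_⟩
      show (1 : T ⧸ N) = q
      rw [← hn, hk, ← two_mul, zpow_mul, hsq2, one_zpow]
    · refine ⟨true, ?_⟩
      show s = q
      rw [← hn, hk, zpow_add, zpow_mul, zpow_one, hsq2, one_zpow, one_mul]
  calc Nat.card (T ⧸ N) ≤ Nat.card Bool := Nat.card_le_card_of_surjective _ hsurj
    _ = 2 := by simp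
end

section
/- Let M be a group, let t ∈ M, and let T be the normal closure of {t} in M. Suppose (i) there exists φ ∈ M with φ * t * φ⁻¹ = t⁻¹, and (ii) there exist g₁, g₂, g₃ ∈ M such that the product (g₁ * t * g₁⁻¹) * (g₂ * t * g₂⁻¹) * (g₃ * t * g₃⁻¹) lies in ⁅T, M⁆. Then T = ⁅T, M⁆, i.e. the quotient T / ⁅T, M⁆ is trivial. -/
/-- Let `M` be a group, `t ∈ M`, and let `T` be the normal closure of `{t}` in `M`.
Suppose (i) some `φ ∈ M` conjugates `t` to `t⁻¹`, and (ii) there are `g₁ g₂ g₃ ∈ M`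
such that the product of the corresponding conjugates of `t` lies in `⁅T, M⁆`.
Then `T = ⁅T, M⁆`, i.e. the quotient `T / ⁅T, M⁆` is trivial. -/
theorem normalClosure_eq_commutator_of_conj_inv_of_three_conjugates
    {M : Type*} [Group M] (t φ : M) (hφ : φ * t * φ⁻¹ = t⁻¹)
    (h3 : ∃ g₁ g₂ g₃ : M,
      (g₁ * t * g₁⁻¹) * (g₂ * t * g₂⁻¹) * (g₃ * t * g₃⁻¹) ∈
        ⁅Subgroup.normalClosure {t}, (⊤ : Subgroup M)⁆) :
    Subgroup.normalClosure {t} = ⁅Subgroup.normalClosure {t}, (⊤ : Subgroup M)⁆ := by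
  set T := Subgroup.normalClosure {t} with hT
  have hTnormal : T.Normal := Subgroup.normalClosure_normal
  set K := ⁅T, (⊤ : Subgroup M)⁆ with hK
  have hKnormal : K.Normal := Subgroup.commutator_normal T ⊤
  have ht : t ∈ T := Subgroup.subset_normalClosure rfl
  -- conjugates of t agree with t mod K
  have hconj : ∀ g : M, (g * t * g⁻¹) * t⁻¹ ∈ K := by
    intro g
    open scoped commutatorElement in
    have : ⁅g, t⁆ ∈ K := by
      rw [hK, Subgroup.commutator_comm]
      exact Subgroup.commutator_mem_commutator (Subgroup.mem_top g) ht
    simpa [commutatorElement_def, mul_assoc] using this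
  -- quotient map
  let π : M →* M ⧸ K := QuotientGroup.mk' K
  have hπconj : ∀ g : M, π (g * t * g⁻¹) = π t := by
    intro g
    have := (QuotientGroup.eq_one_iff _).mpr (hconj g)
    have h2 : π (g * t * g⁻¹) * (π t)⁻¹ = 1 := by
      simpa [π, map_mul, map_inv] using this
    exact mul_inv_eq_one.mp h2
  have hsq : π t ^ 2 = 1 := by
    have h1 : π t = (π t)⁻¹ := by
      have := hπconj φ
      rw [hφ] at this
      simpa using this.symm
    rw [pow_two]
    nth_rewrite 2 [h1]
    exact mul_inv_cancel _
  have hcube : π t ^ 3 = 1 := by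
    obtain ⟨g₁, g₂, g₃, hmem⟩ := h3
    have := (QuotientGroup.eq_one_iff _).mpr hmem
    have : π (g₁ * t * g₁⁻¹) * π (g₂ * t * g₂⁻¹) * π (g₃ * t * g₃⁻¹) = 1 := by
      simpa [π, map_mul] using this
    rw [hπconj g₁, hπconj g₂, hπconj g₃] at this
    simpa [pow_succ, pow_two, mul_assoc] using this
  have htK : t ∈ K := by
    have : π t = 1 := by
      have := hsq
      calc π t = π t ^ 3 * (π t ^ 2)⁻¹ := by group
        _ = 1 := by rw [hcube, hsq]; simp
    exact (QuotientGroup.eq_one_iff _).mp this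
  apply le_antisymm
  · exact Subgroup.normalClosure_le_normal (Set.singleton_subset_iff.mpr htK)
  · calc K ≤ ⁅(⊤ : Subgroup M), T⁆ := by rw [Subgroup.commutator_comm]
      _ ≤ T := Subgroup.commutator_le_right ⊤ T
end

section
/- Let V := (Fin 3 ⊕ Fin 3) → ZMod 2 with standard symplectic form ω(x, y) := x ⬝ᵥ (Matrix.J (Fin 3) (ZMod 2) *ᵥ y), and let Sp := Matrix.symplecticGroup (Fin 3) (ZMod 2) act on V by g • v := g.val *ᵥ v. Let R := MvPolynomial (Fin 3 ⊕ Fin 3) (ZMod 2) ⧸ I, where I is the ideal generated by the elements X i ^ 2 - X i, and define bar : V → R by bar v := (Σ_i (v i) • [X i]) + (Σ_{k : Fin 3} v (Sum.inl k) * v (Sum.inr k)) • 1. Let B² be the ZMod 2-submodule of R spanned by 1, the elements bar(e_i) for the standard basis vectors e_i of V, and the products bar(e_i) * bar(e_j) for i ≠ j. Suppose ρ : Sp →* RingAut R is a group homomorphism such that ρ(g) (bar v) = bar (g • v) for all g ∈ Sp and v ∈ V, and let N be the ZMod 2-submodule of R spanned by the set { ρ(g) m - m : g ∈ Sp, m ∈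 B² }. Then for every nonzero v ∈ V, the element bar v - 1 lies in N. -/
open Matrix

noncomputable section

/-- `V = H₁(Σ₃; ZMod 2)`, a 6-dimensional symplectic vector space over `ZMod 2`. -/
abbrev SympV : Type := (Fin 3 ⊕ Fin 3) → ZMod 2

/-- The standard symplectic form `ω(x, y) = x ⬝ᵥ (J *ᵥ y)`. -/
def sympForm (x y : SympV) : ZMod 2 := x ⬝ᵥ (Matrix.J (Fin 3) (ZMod 2) *ᵥ y)

/-- The ideal generated by `X i ^ 2 - X i` for `i : Fin 3 ⊕ Fin 3`. -/
def boolIdeal : Ideal (MvPolynomial (Fin 3 ⊕ Fin 3) (ZMod 2)) :=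
  Ideal.span (Set.range fun i : Fin 3 ⊕ Fin 3 =>
    MvPolynomial.X i ^ 2 - MvPolynomial.X i)

/-- The Boolean polynomial algebra `R` on six generators over `ZMod 2`. -/
abbrev BoolR : Type := MvPolynomial (Fin 3 ⊕ Fin 3) (ZMod 2) ⧸ boolIdeal

/-- Johnson's map `bar : V → R`,
`v ↦ Σ_i (v i) • [X i] + (Σ_k v(inl k) * v(inr k)) • 1`. -/
def bar (v : SympV) : BoolR :=
  (∑ i : Fin 3 ⊕ Fin 3, (v i) • (Ideal.Quotient.mk boolIdeal (MvPolynomial.X i))) +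
    (∑ k : Fin 3, v (Sum.inl k) * v (Sum.inr k)) • (1 : BoolR)

/-- `B²`: the `ZMod 2`-submodule of `R` spanned by `1`, the `bar (e i)` for the standard
basis vectors `e i`, and the products `bar (e i) * bar (e j)` for `i ≠ j`. -/
def Bsq : Submodule (ZMod 2) BoolR :=
  Submodule.span (ZMod 2)
    ({(1 : BoolR)} ∪
      (Set.range fun i : Fin 3 ⊕ Fin 3 => bar (Pi.single i 1 : SympV)) ∪
      {x : BoolR | ∃ i j : Fin 3 ⊕ Fin 3, i ≠ j ∧
        x = bar (Pi.single i 1 : SympV) * bar (Pi.single j 1 : SympV)})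

/-! ### Auxiliary lemmas -/

/-- Additivity of `bar` up to the symplectic form. -/
lemma bar_add_aux (x y : SympV) :
    bar (x + y) = bar x + bar y + sympForm x y • (1 : BoolR) := by
  have hc : (∑ k : Fin 3, (x + y) (Sum.inl k) * (x + y) (Sum.inr k))
      = (∑ k : Fin 3, x (Sum.inl k) * x (Sum.inr k))
        + (∑ k : Fin 3, y (Sum.inl k) * y (Sum.inr k)) + sympForm x y := by
    simp only [sympForm, dotProduct, Matrix.mulVec, Matrix.J, Matrix.fromBlocks,
      Fintype.sum_sum_type, Fin.sum_univ_three, Pi.add_apply, Matrix.of_apply,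
      Sum.elim_inl, Sum.elim_inr, Matrix.neg_apply, Matrix.one_apply, Matrix.zero_apply]
    simp [Fin.sum_univ_three]
    ring_nf
  unfold bar
  rw [hc]
  simp only [Pi.add_apply, add_smul, Finset.sum_add_distrib]
  module

/-- The crucial computation: `P J P = 0` where `P = v vᵀ`. -/
lemma PJP_zero (v : SympV) :
    vecMulVec v v * Matrix.J (Fin 3) (ZMod 2) * vecMulVec v v = 0 := by
  ext i j
  simp [Matrix.mul_apply, vecMulVec_apply, Matrix.J, Matrix.fromBlocks,
    Fintype.sum_sum_type, Fin.sum_univ_three, Matrix.of_apply]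
  ring
  simp [show (2 : ZMod 2) = 0 from rfl]

/-- The symplectic transvection `x ↦ x + ω(v, x) v` is symplectic. -/
lemma transvection_mem (v : SympV) :
    1 + vecMulVec v v * Matrix.J (Fin 3) (ZMod 2)
      ∈ Matrix.symplecticGroup (Fin 3) (ZMod 2) := by
  rw [SymplecticGroup.mem_iff]
  set P := vecMulVec v v with hP
  set J' := Matrix.J (Fin 3) (ZMod 2) with hJ
  have hPt : Pᵀ = P := by ext i j; simp [hP, vecMulVec_apply, mul_comm]
  have hJt : J'ᵀ = -J' := Matrix.J_transpose _ _
  have hJJ : J' * J' = -1 := Matrix.J_squared _ _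
  have key : P * J' * P = 0 := PJP_zero v
  rw [transpose_add, transpose_one, transpose_mul, hJt, hPt]
  have : (1 + P * J') * J' * (1 + -J' * P)
      = J' + P * (J' * J') + J' * -J' * P + P * (J' * (J' * -J') * P) := by
    noncomm_ring
  rw [this, hJJ]
  have h2 : J' * -J' = 1 := by rw [Matrix.mul_neg, hJJ]; simp
  rw [h2]
  simp only [Matrix.mul_neg, Matrix.mul_one, Matrix.one_mul]
  rw [show J' + -P + P + P * (J' * P) = J' + P * (J' * P) by abel]
  rw [← Matrix.mul_assoc, key, add_zero]

/-- Action of the transvection on a vector. -/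
lemma transvection_apply (v b : SympV) :
    (1 + vecMulVec v v * Matrix.J (Fin 3) (ZMod 2)) *ᵥ b = b + sympForm v b • v := by
  ext i
  simp only [Matrix.add_mulVec, Matrix.one_mulVec, ← Matrix.mulVec_mulVec,
    Pi.add_apply, Pi.smul_apply, sympForm, smul_eq_mul]
  congr 1
  simp only [Matrix.mulVec, dotProduct, vecMulVec_apply]
  rw [Finset.sum_mul]
  refine Finset.sum_congr rfl fun k _ => by ring

/-- `x + x = 0` in `BoolR`. -/
lemma boolR_add_self (x : BoolR) : x + x = 0 := by
  have h := two_smul (ZMod 2) x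
  rw [show (2 : ZMod 2) = 0 from rfl, zero_smul] at h
  exact h.symm

/-- The dual basis index. -/
def dualIdx : Fin 3 ⊕ Fin 3 → Fin 3 ⊕ Fin 3 := Sum.elim Sum.inr Sum.inl

lemma sympForm_single (v : SympV) (j : Fin 3 ⊕ Fin 3) :
    sympForm v (Pi.single (dualIdx j) 1) = v j := by
  rcases j with k | k <;>
  · simp only [sympForm, dualIdx, Sum.elim_inl, Sum.elim_inr, dotProduct, Matrix.mulVec,
      Matrix.J, Matrix.fromBlocks, Fintype.sum_sum_type, Matrix.of_apply, Sum.elim_inl,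
      Sum.elim_inr, Matrix.neg_apply, Matrix.one_apply, Matrix.zero_apply, Pi.single_apply]
    simp [Finset.mul_sum, Finset.sum_ite_eq', mul_ite, CharTwo.neg_eq]

/-- First step of the paper's Lemma: for every nonzero `v ∈ V`, `bar v - 1` lies in the
submodule `N` spanned by the elements `ρ(g) m - m` with `m ∈ B²`; i.e. all degree-1
monomials equal the constant `1` in the coinvariants. -/
theorem bar_sub_one_mem_span_coinvariant_relations
    (ρ : Matrix.symplecticGroup (Fin 3) (ZMod 2) →* RingAut BoolR)
    (hρ : ∀ (g : Matrix.symplecticGroup (Fin 3) (ZMod 2)) (v : SympV),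
      ρ g (bar v) = bar (g.val *ᵥ v)) :
    ∀ v : SympV, v ≠ 0 →
      bar v - 1 ∈ Submodule.span (ZMod 2)
        {x : BoolR | ∃ (g : Matrix.symplecticGroup (Fin 3) (ZMod 2)) (m : BoolR),
          m ∈ Bsq ∧ x = ρ g m - m} := by
  intro v hv
  -- pick a coordinate where `v` is nonzero
  obtain ⟨j, hj⟩ : ∃ j, v j ≠ 0 := Function.ne_iff.mp hv
  have hv1 : v j = 1 := by
    have : ∀ x : ZMod 2, x ≠ 0 → x = 1 := by decide
    exact this _ hj
  set b : SympV := Pi.single (dualIdx j) 1 with hb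
  have hωvb : sympForm v b = 1 := by rw [hb, sympForm_single, hv1]
  set g : Matrix.symplecticGroup (Fin 3) (ZMod 2) :=
    ⟨1 + vecMulVec v v * Matrix.J (Fin 3) (ZMod 2), transvection_mem v⟩ with hg
  have hgb : g.val *ᵥ b = b + v := by
    rw [hg, transvection_apply, hωvb, one_smul]
  -- `bar b` lies in `B²`
  have hbB : bar b ∈ Bsq := by
    apply Submodule.subset_span
    exact Or.inl (Or.inr ⟨dualIdx j, rfl⟩)
  -- the main computation
  have hkey : ρ g (bar b) - bar b = bar v - 1 := by
    rw [hρ g b, hgb, show b + v = v + b from add_comm b v, bar_add_aux v b]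
    have h1 : sympForm v b • (1 : BoolR) = 1 := by rw [hωvb, one_smul]
    rw [h1]
    have h2 : bar v + bar b + 1 - bar b = bar v + 1 := by ring
    have hneg : -(1 : BoolR) = 1 := neg_eq_of_add_eq_zero_left (boolR_add_self 1)
    rw [h2, sub_eq_add_neg, hneg]
  rw [← hkey]
  exact Submodule.subset_span ⟨g, bar b, hbB, rfl⟩

end
end

section
/- Let V := (Fin 3 ⊕ Fin 3) → ZMod 2 with standard symplectic form ω(x, y) := x ⬝ᵥ (Matrix.J (Fin 3) (ZMod 2) *ᵥ y), and let Sp := Matrix.symplecticGroup (Fin 3) (ZMod 2) act on V by g • v := g.val *ᵥ v. Let R := MvPolynomial (Fin 3 ⊕ Fin 3) (ZMod 2) ⧸ I, where I is the ideal generated by the elements X i ^ 2 - X i, and define bar : V → R by bar v := (Σ_i (v i) • [X i]) + (Σ_{k : Fin 3} v (Sum.inl k) * v (Sum.inr k)) • 1. Let B² be the ZMod 2-submodule of R spanned by 1, the elements bar(e_i) for the standard basis vectors e_i of V, and the products bar(e_i) * bar(e_j) for i ≠ j. Suppose ρ : Sp →* RingAut R is a group homomorphism such that ρ(g) (bar v)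 = bar (g • v) for all g ∈ Sp and v ∈ V, and let N be the ZMod 2-submodule of R spanned by the set { ρ(g) m - m : g ∈ Sp, m ∈ B² }. Then (1 : R) ∈ N. -/
open Matrix

noncomputable section

/-! ### Auxiliary definitions and lemmas -/

/-- The image of `X i` in `BoolR`. -/
def Xq (i : Fin 3 ⊕ Fin 3) : BoolR := Ideal.Quotient.mk boolIdeal (MvPolynomial.X i)

lemma Xq_sq (i : Fin 3 ⊕ Fin 3) : Xq i * Xq i = Xq i := by
  have h : (MvPolynomial.X i ^ 2 - MvPolynomial.X i :
      MvPolynomial (Fin 3 ⊕ Fin 3) (ZMod 2)) ∈ boolIdeal :=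
    Ideal.subset_span ⟨i, rfl⟩
  have h2 := Ideal.Quotient.eq_zero_iff_mem.mpr h
  rw [map_sub, map_pow, sub_eq_zero] at h2
  calc Xq i * Xq i = Xq i ^ 2 := (sq (Xq i)).symm
  _ = Xq i := h2

lemma two_eq_zero : (1 + 1 : BoolR) = 0 := by
  have hp : (1 + 1 : MvPolynomial (Fin 3 ⊕ Fin 3) (ZMod 2)) = 0 := by
    rw [← MvPolynomial.C_1, ← map_add, show ((1 : ZMod 2) + 1) = 0 from rfl, map_zero]
  have : (1 + 1 : BoolR) = Ideal.Quotient.mk boolIdeal (1 + 1) := by rw [map_add, _root_.map_one]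
  rw [this, hp, map_zero]

/-- Symplectic transvection `τ_v` as a matrix. -/
def tv (v : SympV) : Matrix (Fin 3 ⊕ Fin 3) (Fin 3 ⊕ Fin 3) (ZMod 2) :=
  1 + Matrix.vecMulVec v (Matrix.J (Fin 3) (ZMod 2) *ᵥ v)

def ea : SympV := Pi.single (Sum.inl 0) 1
def eb : SympV := Pi.single (Sum.inr 0) 1
def ec : SympV := Pi.single (Sum.inl 1) 1
def ed : SympV := Pi.single (Sum.inr 1) 1

lemma tv_mem (v : SympV)
    (h : tv v * Matrix.J (Fin 3) (ZMod 2) * (tv v)ᵀ = Matrix.J (Fin 3) (ZMod 2)) :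
    tv v ∈ Matrix.symplecticGroup (Fin 3) (ZMod 2) := by
  rw [SymplecticGroup.mem_iff]; exact h

def g1 : Matrix.symplecticGroup (Fin 3) (ZMod 2) := ⟨tv (eb + ec), tv_mem _ (by decide)⟩
def g2 : Matrix.symplecticGroup (Fin 3) (ZMod 2) := ⟨tv ea, tv_mem _ (by decide)⟩
def g3 : Matrix.symplecticGroup (Fin 3) (ZMod 2) := ⟨tv (ea + eb), tv_mem _ (by decide)⟩
def g4 : Matrix.symplecticGroup (Fin 3) (ZMod 2) := ⟨tv ed, tv_mem _ (by decide)⟩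
def g5 : Matrix.symplecticGroup (Fin 3) (ZMod 2) := ⟨tv (ec + ed), tv_mem _ (by decide)⟩

lemma g1_a : g1.val *ᵥ ea = ea + eb + ec := by decide
lemma g1_b : g1.val *ᵥ eb = eb := by decide
lemma g2_b : g2.val *ᵥ eb = ea + eb := by decide
lemma g2_c : g2.val *ᵥ ec = ec := by decide
lemma g3_a : g3.val *ᵥ ea = eb := by decide
lemma g3_c : g3.val *ᵥ ec = ec := by decide
lemma g4_c : g4.val *ᵥ ec = ec + ed := by decide
lemma g5_c : g5.val *ᵥ ec = ed := by decide

lemma bar_expand (v : SympV) : bar v =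
    v (Sum.inl 0) • Xq (Sum.inl 0) + v (Sum.inl 1) • Xq (Sum.inl 1) +
    v (Sum.inl 2) • Xq (Sum.inl 2) + v (Sum.inr 0) • Xq (Sum.inr 0) +
    v (Sum.inr 1) • Xq (Sum.inr 1) + v (Sum.inr 2) • Xq (Sum.inr 2) +
    (v (Sum.inl 0) * v (Sum.inr 0) + v (Sum.inl 1) * v (Sum.inr 1) +
      v (Sum.inl 2) * v (Sum.inr 2)) • 1 := by
  simp only [bar, Fintype.sum_sum_type, Fin.sum_univ_three, Xq]
  ring

lemma bar_ea : bar ea = Xq (Sum.inl 0) := by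
  rw [bar_expand]; simp +decide [ea, Pi.single_apply]
lemma bar_eb : bar eb = Xq (Sum.inr 0) := by
  rw [bar_expand]; simp +decide [eb, Pi.single_apply]
lemma bar_ec : bar ec = Xq (Sum.inl 1) := by
  rw [bar_expand]; simp +decide [ec, Pi.single_apply]
lemma bar_ed : bar ed = Xq (Sum.inr 1) := by
  rw [bar_expand]; simp +decide [ed, Pi.single_apply]
lemma bar_abc : bar (ea + eb + ec) =
    Xq (Sum.inl 0) + Xq (Sum.inr 0) + Xq (Sum.inl 1) + 1 := by
  rw [bar_expand]; simp +decide [ea, eb, ec, Pi.single_apply]; try ring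
lemma bar_ab : bar (ea + eb) = Xq (Sum.inl 0) + Xq (Sum.inr 0) + 1 := by
  rw [bar_expand]; simp +decide [ea, eb, Pi.single_apply]; try ring
lemma bar_cd : bar (ec + ed) = Xq (Sum.inl 1) + Xq (Sum.inr 1) + 1 := by
  rw [bar_expand]; simp +decide [ec, ed, Pi.single_apply]; try ring

set_option maxHeartbeats 1600000 in
/-- Final computation in the paper's Lemma: the constant `1` lies in the submodule `N`
spanned by the elements `ρ(g) m - m` with `m ∈ B²`. -/
theorem one_mem_span_coinvariant_relations
    (ρ : Matrix.symplecticGroup (Fin 3) (ZMod 2) →* RingAut BoolR)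
    (hρ : ∀ (g : Matrix.symplecticGroup (Fin 3) (ZMod 2)) (v : SympV),
      ρ g (bar v) = bar (g.val *ᵥ v)) :
    (1 : BoolR) ∈ Submodule.span (ZMod 2)
      {x : BoolR | ∃ (g : Matrix.symplecticGroup (Fin 3) (ZMod 2)) (m : BoolR),
        m ∈ Bsq ∧ x = ρ g m - m} := by
  have hm1B : bar ea * bar eb ∈ Bsq :=
    Submodule.subset_span (Or.inr ⟨Sum.inl 0, Sum.inr 0, by decide, rfl⟩)
  have hm2B : bar ec * bar eb ∈ Bsq :=
    Submodule.subset_span (Or.inr ⟨Sum.inl 1, Sum.inr 0, by decide, rfl⟩)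
  have hm3B : bar ec * bar ea ∈ Bsq :=
    Submodule.subset_span (Or.inr ⟨Sum.inl 1, Sum.inl 0, by decide, rfl⟩)
  have hm4B : bar ec ∈ Bsq :=
    Submodule.subset_span (Or.inl (Or.inr ⟨Sum.inl 1, rfl⟩))
  have hE1 : ρ g1 (bar ea * bar eb) - bar ea * bar eb ∈ Submodule.span (ZMod 2)
      {x : BoolR | ∃ g m, m ∈ Bsq ∧ x = ρ g m - m} :=
    Submodule.subset_span ⟨g1, _, hm1B, rfl⟩
  have hE2 : ρ g2 (bar ec * bar eb) - bar ec * bar eb ∈ Submodule.span (ZMod 2)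
      {x : BoolR | ∃ g m, m ∈ Bsq ∧ x = ρ g m - m} :=
    Submodule.subset_span ⟨g2, _, hm2B, rfl⟩
  have hE3 : ρ g3 (bar ec * bar ea) - bar ec * bar ea ∈ Submodule.span (ZMod 2)
      {x : BoolR | ∃ g m, m ∈ Bsq ∧ x = ρ g m - m} :=
    Submodule.subset_span ⟨g3, _, hm3B, rfl⟩
  have hE4 : ρ g4 (bar ec) - bar ec ∈ Submodule.span (ZMod 2)
      {x : BoolR | ∃ g m, m ∈ Bsq ∧ x = ρ g m - m} :=
    Submodule.subset_span ⟨g4, _, hm4B, rfl⟩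
  have hE5 : ρ g5 (bar ec) - bar ec ∈ Submodule.span (ZMod 2)
      {x : BoolR | ∃ g m, m ∈ Bsq ∧ x = ρ g m - m} :=
    Submodule.subset_span ⟨g5, _, hm4B, rfl⟩
  have c1 : ρ g1 (bar ea * bar eb) - bar ea * bar eb =
      (Xq (Sum.inl 0) + Xq (Sum.inr 0) + Xq (Sum.inl 1) + 1) * Xq (Sum.inr 0) -
        Xq (Sum.inl 0) * Xq (Sum.inr 0) := by
    rw [_root_.map_mul, hρ, hρ, g1_a, g1_b, bar_abc, bar_ea, bar_eb]
  have c2 : ρ g2 (bar ec * bar eb) - bar ec * bar eb =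
      Xq (Sum.inl 1) * (Xq (Sum.inl 0) + Xq (Sum.inr 0) + 1) -
        Xq (Sum.inl 1) * Xq (Sum.inr 0) := by
    rw [_root_.map_mul, hρ, hρ, g2_b, g2_c, bar_ab, bar_ec, bar_eb]
  have c3 : ρ g3 (bar ec * bar ea) - bar ec * bar ea =
      Xq (Sum.inl 1) * Xq (Sum.inr 0) - Xq (Sum.inl 1) * Xq (Sum.inl 0) := by
    rw [_root_.map_mul, hρ, hρ, g3_a, g3_c, bar_eb, bar_ec, bar_ea]
  have c4 : ρ g4 (bar ec) - bar ec =
      (Xq (Sum.inl 1) + Xq (Sum.inr 1) + 1) - Xq (Sum.inl 1) := by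
    rw [hρ, g4_c, bar_cd, bar_ec]
  have c5 : ρ g5 (bar ec) - bar ec = Xq (Sum.inr 1) - Xq (Sum.inl 1) := by
    rw [hρ, g5_c, bar_ed, bar_ec]
  have key : (1 : BoolR) =
      (ρ g1 (bar ea * bar eb) - bar ea * bar eb) + (ρ g2 (bar ec * bar eb) - bar ec * bar eb) +
      (ρ g3 (bar ec * bar ea) - bar ec * bar ea) + (ρ g4 (bar ec) - bar ec) +
      (ρ g5 (bar ec) - bar ec) := by
    rw [c1, c2, c3, c4, c5]
    have hB := Xq_sq (Sum.inr 0)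
    have h2 := two_eq_zero
    linear_combination (-1 : BoolR) * hB -
      (Xq (Sum.inr 0) + Xq (Sum.inl 1) * Xq (Sum.inr 0) + Xq (Sum.inr 1)) * h2
  rw [key]
  exact add_mem (add_mem (add_mem (add_mem hE1 hE2) hE3) hE4) hE5

end
end
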